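/- Fix integers k ≥ 1, m ≥ 1 and a time t > 0. Let {X_[r]j : r = 1,…,k; j = 1,…,m} be mutually independent nonnegative random variables where X_[r]j has CDF F_[r] with F_[r](t) > 0; let K_[r](t) = (∫₀ᵗ F_[r](x)dx)/F_[r](t) and σ²_[r](t) = (2∫₀ᵗ(t−x)F_[r](x)dx)/F_[r](t) − K_[r](t)². Define V_r = Σ_{j=1}^{m} 1{X_[r]j ≤ t}, U_r = Σ_{j=1}^{m} (t − X_[r]j) 1{X_[r]j ≤ t}, and K_RSS(t) = (Σ_r U_r)·1{Σ_r V_r > 0}/(Σ_r V_r) (taken to be 0 when Σ_r V_r = 0). Then Var[K_RSS(t)] = Σ_{v: Σv_r>0} [p(v)/(Σ_r v_r)²] Σ_{r=1}^{k} v_r σ²_[r](t) + Σ_{v: Σv_r>0} [p(v)/(Σ_r v_r)²] (Σ_{r=1}^{k} v_r K_[r](t))² − ( Σ_{v: Σv_r>0} [p(v)/(Σ_r v_r)] Σ_{r=1}^{k} v_r K_[r](t) )², where the sums range over v ∈ {0,…,m}^k with v₁+⋯+v_k > 0 and p(v) = Π_{r=1}^{k} C(m,v_r) F_[r](t)^{v_r}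 (1 − F_[r](t))^{m−v_r}. -/

import Mathlib

set_option linter.unusedSectionVars false
set_option linter.unusedVariables false
set_option maxHeartbeats 1000000
open MeasureTheory ProbabilityTheory Finset

lemma aux_ae_snd_mem {Ω : Type*} [MeasurableSpace Ω] (μ : Measure Ω) [IsProbabilityMeasure μ]
    {s : Set ℝ} (hs : MeasurableSet s) :
    ∀ᵐ z ∂(μ.prod (volume.restrict s)), z.2 ∈ s := by
  rw [MeasureTheory.ae_iff]
  have hsub : {z : Ω × ℝ | ¬ z.2 ∈ s} ⊆ Set.univ ×ˢ sᶜ := by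
    intro z hz; exact ⟨trivial, hz⟩
  refine measure_mono_null hsub ?_
  rw [Measure.prod_prod, Measure.restrict_apply hs.compl]
  simp

lemma aux_finite_restrict (t : ℝ) :
    IsFiniteMeasure (volume.restrict (Set.Ioc (0:ℝ) t)) := by
  constructor
  rw [Measure.restrict_apply MeasurableSet.univ]
  simp [Real.volume_Ioc]

lemma aux_inter_ae {t s : ℝ} (hs : 0 ≤ s) (h : s ≤ t) :
    (Set.Ioc 0 t ∩ Set.Ici s : Set ℝ) =ᵐ[volume] Set.Ioc s t := by
  have h1 : Set.Ioc s t ⊆ Set.Ioc 0 t ∩ Set.Ici s := by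
    intro x hx; exact ⟨⟨lt_of_le_of_lt hs hx.1, hx.2⟩, le_of_lt hx.1⟩
  have h2 : Set.Ioc 0 t ∩ Set.Ici s ⊆ Set.Icc s t := by
    intro x hx; exact ⟨hx.2, hx.1.2⟩
  have h3 : (Set.Ioc s t : Set ℝ) =ᵐ[volume] Set.Icc s t := Ioc_ae_eq_Icc
  refine Filter.EventuallyEq.trans ?_ h3.symm
  rw [Filter.eventuallyEq_set]
  have hne : ∀ᵐ x : ℝ, x ≠ s := by
    simp only [ae_iff, not_not]
    exact measure_mono_null (fun x hx => hx) (by simp : volume ({s} : Set ℝ) = 0)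
  filter_upwards [hne] with x hx
  constructor
  · intro hmem; exact h2 hmem
  · intro hmem; exact h1 ⟨lt_of_le_of_ne hmem.1 (Ne.symm hx), hmem.2⟩

lemma aux_empty_inter {t s : ℝ} (h : ¬ s ≤ t) :
    (Set.Ioc 0 t ∩ Set.Ici s : Set ℝ) = ∅ := by
  ext x; simp only [Set.mem_inter_iff, Set.mem_Ioc, Set.mem_Ici, Set.mem_empty_iff_false,
    iff_false]
  rintro ⟨⟨_, hxt⟩, hsx⟩; exact h (le_trans hsx hxt)

lemma aux_pt1 {t s : ℝ} (hs : 0 ≤ s) :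
    ∫ x in Set.Ioc (0:ℝ) t, (if s ≤ x then (1:ℝ) else 0) =
      (t - s) * (if s ≤ t then (1:ℝ) else 0) := by
  have hmeq : (fun x => if s ≤ x then (1:ℝ) else 0) = (Set.Ici s).indicator 1 := by
    funext x; by_cases h : s ≤ x <;> simp [Set.indicator, Set.mem_Ici, h]
  rw [hmeq, setIntegral_indicator measurableSet_Ici]
  by_cases h : s ≤ t
  · rw [setIntegral_congr_set (aux_inter_ae hs h)]
    simp only [Pi.one_apply, setIntegral_const, smul_eq_mul, mul_one, Real.volume_Ioc,
      ENNReal.toReal_ofReal (sub_nonneg.mpr h)]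
    simp [h]
  · rw [aux_empty_inter h]; simp [h]

lemma aux_pt2 {t s : ℝ} (hs : 0 ≤ s) :
    ∫ x in Set.Ioc (0:ℝ) t, (2 * (t - x) * (if s ≤ x then (1:ℝ) else 0)) =
      ((t - s) * (if s ≤ t then (1:ℝ) else 0)) ^ 2 := by
  have hmeq : (fun x => 2 * (t - x) * (if s ≤ x then (1:ℝ) else 0))
      = (Set.Ici s).indicator (fun x => 2 * (t - x)) := by
    funext x; by_cases h : s ≤ x <;> simp [Set.indicator, Set.mem_Ici, h]
  rw [hmeq, setIntegral_indicator measurableSet_Ici]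
  by_cases h : s ≤ t
  · rw [setIntegral_congr_set (aux_inter_ae hs h)]
    have : ∫ x in Set.Ioc s t, 2 * (t - x) = ∫ x in s..t, 2 * (t - x) :=
      (intervalIntegral.integral_of_le h).symm
    rw [this]
    have h2 : ∫ x in s..t, 2 * (t - x) = 2 * (t * (t - s) - (t^2 - s^2)/2) := by
      rw [intervalIntegral.integral_const_mul]
      have : ∫ x in s..t, (t - x) = (∫ x in s..t, (t:ℝ)) - ∫ x in s..t, x := by
        apply intervalIntegral.integral_sub intervalIntegrable_const
        exact intervalIntegral.intervalIntegrable_id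
      rw [this, intervalIntegral.integral_const, integral_id]
      simp only [smul_eq_mul]
      ring
    rw [h2]; simp only [if_pos h]; ring
  · rw [aux_empty_inter h]; simp [h]


section LC
variable {Ω : Type*} [MeasurableSpace Ω]

lemma aux_cdf (μ : Measure Ω) [IsProbabilityMeasure μ] {Z : Ω → ℝ} (hZ : Measurable Z)
    (x : ℝ) :
    ∫ ω, (if Z ω ≤ x then (1:ℝ) else 0) ∂μ = (μ {ω | Z ω ≤ x}).toReal := by
  have : (fun ω => if Z ω ≤ x then (1:ℝ) else 0) = ({ω | Z ω ≤ x}).indicator 1 := by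
    funext ω; by_cases h : Z ω ≤ x <;> simp [Set.indicator, h]
  rw [this]
  exact integral_indicator_one (show MeasurableSet {ω | Z ω ≤ x} from hZ measurableSet_Iic)

lemma aux_LC1 (μ : Measure Ω) [IsProbabilityMeasure μ] {Z : Ω → ℝ} (hZ : Measurable Z)
    (hZnn : ∀ ω, 0 ≤ Z ω) {t : ℝ} (ht : 0 < t) :
    ∫ ω, (t - Z ω) * (if Z ω ≤ t then (1:ℝ) else 0) ∂μ
      = ∫ x in Set.Ioc (0:ℝ) t, (μ {ω | Z ω ≤ x}).toReal := by
  haveI := aux_finite_restrict t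
  set ν := volume.restrict (Set.Ioc (0:ℝ) t) with hν
  have hmeas : Measurable (Function.uncurry fun (ω : Ω) (x : ℝ) =>
      if Z ω ≤ x then (1:ℝ) else 0) := by
    apply Measurable.ite (measurableSet_le (hZ.comp measurable_fst) measurable_snd)
      measurable_const measurable_const
  have hint : Integrable (Function.uncurry fun (ω : Ω) (x : ℝ) =>
      if Z ω ≤ x then (1:ℝ) else 0) (μ.prod ν) := by
    refine (integrable_const (1:ℝ)).mono' hmeas.aestronglyMeasurable ?_
    filter_upwards with z
    by_cases h : Z z.1 ≤ z.2 <;> simp [Function.uncurry, h]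
  have hswap := integral_integral_swap hint
  have hL : ∫ ω, ∫ x, (if Z ω ≤ x then (1:ℝ) else 0) ∂ν ∂μ
      = ∫ ω, (t - Z ω) * (if Z ω ≤ t then (1:ℝ) else 0) ∂μ := by
    apply integral_congr_ae; filter_upwards with ω
    exact aux_pt1 (hZnn ω)
  have hR : ∫ x, ∫ ω, (if Z ω ≤ x then (1:ℝ) else 0) ∂μ ∂ν
      = ∫ x in Set.Ioc (0:ℝ) t, (μ {ω | Z ω ≤ x}).toReal := by
    apply integral_congr_ae; filter_upwards with x
    exact aux_cdf μ hZ x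
  rw [← hL, hswap, hR]

lemma aux_LC2 (μ : Measure Ω) [IsProbabilityMeasure μ] {Z : Ω → ℝ} (hZ : Measurable Z)
    (hZnn : ∀ ω, 0 ≤ Z ω) {t : ℝ} (ht : 0 < t) :
    ∫ ω, ((t - Z ω) * (if Z ω ≤ t then (1:ℝ) else 0)) ^ 2 ∂μ
      = ∫ x in Set.Ioc (0:ℝ) t, 2 * (t - x) * (μ {ω | Z ω ≤ x}).toReal := by
  haveI := aux_finite_restrict t
  set ν := volume.restrict (Set.Ioc (0:ℝ) t) with hν
  have hmeas : Measurable (Function.uncurry fun (ω : Ω) (x : ℝ) =>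
      2 * (t - x) * (if Z ω ≤ x then (1:ℝ) else 0)) := by
    apply Measurable.mul
    · exact (measurable_const.mul (measurable_const.sub measurable_snd)).comp measurable_id
    · exact Measurable.ite (measurableSet_le (hZ.comp measurable_fst) measurable_snd)
        measurable_const measurable_const
  have hint : Integrable (Function.uncurry fun (ω : Ω) (x : ℝ) =>
      2 * (t - x) * (if Z ω ≤ x then (1:ℝ) else 0)) (μ.prod ν) := by
    refine (integrable_const (2*t)).mono' hmeas.aestronglyMeasurable ?_
    filter_upwards [aux_ae_snd_mem μ measurableSet_Ioc] with z hz
    have h1 : 0 ≤ t - z.2 := sub_nonneg.mpr hz.2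
    have h2 : t - z.2 ≤ t := by linarith [hz.1]
    by_cases h : Z z.1 ≤ z.2
    · simp only [Function.uncurry, h, if_pos, mul_one]
      rw [Real.norm_eq_abs, abs_of_nonneg (by positivity)]
      linarith
    · simp only [Function.uncurry, h, if_neg, not_false_iff, mul_zero]
      simp only [norm_zero]
      positivity
  have hswap := integral_integral_swap hint
  have hL : ∫ ω, ∫ x, (2 * (t - x) * if Z ω ≤ x then (1:ℝ) else 0) ∂ν ∂μ
      = ∫ ω, ((t - Z ω) * (if Z ω ≤ t then (1:ℝ) else 0)) ^ 2 ∂μ := by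
    apply integral_congr_ae; filter_upwards with ω
    exact aux_pt2 (hZnn ω)
  have hR : ∫ x, ∫ ω, (2 * (t - x) * if Z ω ≤ x then (1:ℝ) else 0) ∂μ ∂ν
      = ∫ x in Set.Ioc (0:ℝ) t, 2 * (t - x) * (μ {ω | Z ω ≤ x}).toReal := by
    apply integral_congr_ae; filter_upwards with x
    rw [integral_const_mul, aux_cdf μ hZ x]
  rw [← hL, hswap, hR]

end LC



/-- Expansion of the indicator that a sum of 0/1 variables equals `n`. -/
lemma aux_expand {m : ℕ} (w : Fin m → ℝ) (hw : ∀ j, w j = 0 ∨ w j = 1) (n : ℕ) :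
    ∑ S ∈ powersetCard n (univ : Finset (Fin m)),
      ∏ j, (if j ∈ S then w j else 1 - w j)
    = if (∑ j, w j) = (n : ℝ) then 1 else 0 := by
  classical
  set T : Finset (Fin m) := univ.filter (fun j => w j = 1) with hT
  have hprod : ∀ S : Finset (Fin m),
      (∏ j, (if j ∈ S then w j else 1 - w j)) = if S = T then 1 else 0 := by
    intro S
    by_cases hST : S = T
    · subst hST
      rw [if_pos rfl]
      apply Finset.prod_eq_one
      intro j _
      by_cases hj : j ∈ T
      · rw [if_pos hj]
        exact (Finset.mem_filter.mp hj).2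
      · rw [if_neg hj]
        have : w j = 0 := by
          rcases hw j with h0 | h1
          · exact h0
          · exact absurd (Finset.mem_filter.mpr ⟨Finset.mem_univ j, h1⟩) hj
        rw [this]; ring
    · rw [if_neg hST]
      have : ∃ j, (j ∈ S ∧ j ∉ T) ∨ (j ∈ T ∧ j ∉ S) := by
        by_contra hcon
        push_neg at hcon
        apply hST
        ext j
        constructor
        · intro hj; by_contra hjT; exact hjT ((hcon j).1 hj)
        · intro hj; by_contra hjS; exact hjS ((hcon j).2 hj)
      obtain ⟨j, hj | hj⟩ := this
      · apply Finset.prod_eq_zero (Finset.mem_univ j)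
        rw [if_pos hj.1]
        rcases hw j with h0 | h1
        · exact h0
        · exact absurd (Finset.mem_filter.mpr ⟨Finset.mem_univ j, h1⟩) hj.2
      · apply Finset.prod_eq_zero (Finset.mem_univ j)
        rw [if_neg hj.2, (Finset.mem_filter.mp hj.1).2]
        ring
  simp_rw [hprod]
  rw [Finset.sum_ite_eq' (powersetCard n univ) T (fun _ => (1:ℝ))]
  have hsum : ∑ j, w j = (T.card : ℝ) := by
    have h1 : ∀ j, w j = if j ∈ T then (1:ℝ) else 0 := by
      intro j
      by_cases hj : j ∈ T
      · rw [if_pos hj]; exact (Finset.mem_filter.mp hj).2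
      · rw [if_neg hj]
        rcases hw j with h0 | h1
        · exact h0
        · exact absurd (Finset.mem_filter.mpr ⟨Finset.mem_univ j, h1⟩) hj
    rw [Finset.sum_congr rfl (fun j _ => h1 j), Finset.sum_ite_mem, Finset.univ_inter,
      Finset.sum_const]
    simp
  rw [hsum]
  by_cases hc : T.card = n
  · rw [if_pos (Finset.mem_powersetCard_univ.mpr hc), if_pos (by exact_mod_cast hc)]
  · rw [if_neg (fun h => hc (Finset.mem_powersetCard_univ.mp h)),
      if_neg (by exact_mod_cast hc)]

noncomputable def phiW (t x : ℝ) : ℝ := if x ≤ t then 1 else 0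
noncomputable def phiY (t x : ℝ) : ℝ := (t - x) * phiW t x

noncomputable def rho {k m : ℕ} (t : ℝ) (S : Fin k → Finset (Fin m))
    (p : Fin k × Fin m) : ℝ → ℝ :=
  if p.2 ∈ S p.1 then phiW t else fun x => 1 - phiW t x

lemma phiW_meas (t : ℝ) : Measurable (phiW t) := by
  unfold phiW; exact Measurable.ite measurableSet_Iic measurable_const measurable_const

lemma phiY_meas (t : ℝ) : Measurable (phiY t) := by
  unfold phiY; exact (measurable_const.sub measurable_id).mul (phiW_meas t)

lemma rho_meas {k m : ℕ} (t : ℝ) (S : Fin k → Finset (Fin m)) (p : Fin k × Fin m) :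
    Measurable (rho t S p) := by
  unfold rho
  by_cases h : p.2 ∈ S p.1
  · rw [if_pos h]; exact phiW_meas t
  · rw [if_neg h]; exact measurable_const.sub (phiW_meas t)

lemma phiW_mem (t x : ℝ) : phiW t x ∈ Set.Icc (0:ℝ) 1 := by
  unfold phiW; by_cases h : x ≤ t <;> simp [h]

lemma rho_mem {k m : ℕ} (t : ℝ) (S : Fin k → Finset (Fin m)) (p : Fin k × Fin m) (x : ℝ) :
    rho t S p x ∈ Set.Icc (0:ℝ) 1 := by
  unfold rho
  by_cases h : p.2 ∈ S p.1
  · rw [if_pos h]; exact phiW_mem t x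
  · rw [if_neg h]
    have := phiW_mem t x
    constructor <;> [linarith [this.2]; linarith [this.1]]

lemma phiY_mem {t x : ℝ} (ht : 0 < t) (hx : 0 ≤ x) : phiY t x ∈ Set.Icc (0:ℝ) t := by
  unfold phiY phiW
  by_cases h : x ≤ t
  · simp only [h, if_pos, mul_one]
    constructor <;> linarith
  · simp only [h, if_neg, not_false_iff, mul_zero]
    exact ⟨le_rfl, by linarith⟩

lemma phiY_mul_phiW (t x : ℝ) : phiY t x * phiW t x = phiY t x := by
  unfold phiY phiW; by_cases h : x ≤ t <;> simp [h]

lemma phiY_mul_one_sub_phiW (t x : ℝ) : phiY t x * (1 - phiW t x) = 0 := by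
  unfold phiY phiW; by_cases h : x ≤ t <;> simp [h]

lemma phiY_sq_mul_phiW (t x : ℝ) : phiY t x ^ 2 * phiW t x = phiY t x ^ 2 := by
  unfold phiY phiW; by_cases h : x ≤ t <;> simp [h]

-- product with two special positions
lemma prod_two_special {ι : Type*} [DecidableEq ι] [Fintype ι] (f g : ι → ℝ)
    (p₁ p₂ : ι) (h : p₁ ≠ p₂) (c₁ c₂ : ℝ) (hc₁ : f p₁ = c₁) (hc₂ : f p₂ = c₂)
    (hfg : ∀ p, p ≠ p₁ → p ≠ p₂ → f p = g p) :
    ∏ p, f p = c₁ * c₂ * ∏ p ∈ (univ.erase p₁).erase p₂, g p := by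
  have h2 : p₂ ∈ univ.erase p₁ := Finset.mem_erase.mpr ⟨Ne.symm h, Finset.mem_univ p₂⟩
  rw [← Finset.mul_prod_erase univ f (Finset.mem_univ p₁),
    ← Finset.mul_prod_erase (univ.erase p₁) f h2, ← mul_assoc, hc₁, hc₂]
  congr 1
  apply Finset.prod_congr rfl
  intro p hp
  have hp2 := Finset.mem_erase.mp hp
  have hp1 := Finset.mem_erase.mp hp2.2
  exact hfg p hp1.1 hp2.1

lemma prod_one_special {ι : Type*} [DecidableEq ι] [Fintype ι] (f g : ι → ℝ)
    (p₁ : ι) (c₁ : ℝ) (hc₁ : f p₁ = c₁) (hfg : ∀ p, p ≠ p₁ → f p = g p) :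
    ∏ p, f p = c₁ * ∏ p ∈ univ.erase p₁, g p := by
  rw [← Finset.mul_prod_erase univ f (Finset.mem_univ p₁), hc₁]
  congr 1
  apply Finset.prod_congr rfl
  intro p hp
  exact hfg p (Finset.mem_erase.mp hp).1


lemma aux_B0 {k m : ℕ} (F : Fin k → ℝ) (v : Fin k → ℕ) (S : Fin k → Finset (Fin m))
    (hcard : ∀ r, (S r).card = v r) :
    ∏ p : Fin k × Fin m, (if p.2 ∈ S p.1 then F p.1 else 1 - F p.1)
      = ∏ r, F r ^ (v r) * (1 - F r) ^ (m - v r) := by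
  classical
  rw [Fintype.prod_prod_type]
  apply Finset.prod_congr rfl
  intro r _
  simp only
  rw [Finset.prod_ite]
  have h1 : (univ.filter (fun j : Fin m => j ∈ S r)) = S r := by
    ext j; simp
  have h2 : (univ.filter (fun j : Fin m => ¬ j ∈ S r)) = (S r)ᶜ := by
    ext j; simp
  rw [Finset.prod_const, Finset.prod_const, h1, h2, hcard r, Finset.card_compl, hcard r]
  simp [Fintype.card_fin]

lemma aux_sum_mem {k m : ℕ} (c : Fin k → ℝ) (v : Fin k → ℕ) (S : Fin k → Finset (Fin m))
    (hcard : ∀ r, (S r).card = v r) :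
    ∑ p : Fin k × Fin m, (if p.2 ∈ S p.1 then c p.1 else 0) = ∑ r, (v r : ℝ) * c r := by
  classical
  rw [Fintype.sum_prod_type]
  apply Finset.sum_congr rfl
  intro r _
  simp only
  rw [Finset.sum_ite_mem, Finset.univ_inter, Finset.sum_const, ← hcard r]
  simp [nsmul_eq_mul]

lemma aux_sum_pairs {k m : ℕ} (K bb : Fin k → ℝ) (v : Fin k → ℕ)
    (S : Fin k → Finset (Fin m)) (hcard : ∀ r, (S r).card = v r) :
    (∑ p₁ : Fin k × Fin m, ∑ p₂ : Fin k × Fin m,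
      (if p₁.2 ∈ S p₁.1 ∧ p₂.2 ∈ S p₂.1 then
        (if p₁ = p₂ then bb p₁.1 else K p₁.1 * K p₂.1) else 0))
    = ∑ r, (v r : ℝ) * bb r
      + ((∑ r, (v r : ℝ) * K r) ^ 2 - ∑ r, (v r : ℝ) * K r ^ 2) := by
  classical
  set hh : Fin k × Fin m → ℝ := fun p => if p.2 ∈ S p.1 then K p.1 else 0 with hhh
  set dd : Fin k × Fin m → ℝ := fun p => if p.2 ∈ S p.1 then bb p.1 else 0 with hdd
  have hterm : ∀ p₁ p₂ : Fin k × Fin m,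
      (if p₁.2 ∈ S p₁.1 ∧ p₂.2 ∈ S p₂.1 then
        (if p₁ = p₂ then bb p₁.1 else K p₁.1 * K p₂.1) else 0)
      = hh p₁ * hh p₂ + (if p₁ = p₂ then dd p₁ - hh p₁ * hh p₁ else 0) := by
    intro p₁ p₂
    by_cases heq : p₁ = p₂
    · subst heq
      by_cases hm : p₁.2 ∈ S p₁.1 <;> simp [hhh, hdd, hm]
    · by_cases hm1 : p₁.2 ∈ S p₁.1 <;> by_cases hm2 : p₂.2 ∈ S p₂.1
        <;> simp [hhh, hdd, hm1, hm2, heq]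
  simp_rw [hterm, Finset.sum_add_distrib]
  have e1 : ∑ p₁ : Fin k × Fin m, ∑ p₂ : Fin k × Fin m, hh p₁ * hh p₂
      = (∑ r, (v r : ℝ) * K r) ^ 2 := by
    have : ∑ p₁ : Fin k × Fin m, ∑ p₂ : Fin k × Fin m, hh p₁ * hh p₂
        = (∑ p : Fin k × Fin m, hh p) * (∑ p : Fin k × Fin m, hh p) := by
      rw [Finset.sum_mul_sum]
    rw [this, aux_sum_mem K v S hcard, sq]
  have e2 : ∑ p₁ : Fin k × Fin m, (∑ p₂ : Fin k × Fin m,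
      (if p₁ = p₂ then dd p₁ - hh p₁ * hh p₁ else 0))
      = ∑ r, (v r : ℝ) * bb r - ∑ r, (v r : ℝ) * K r ^ 2 := by
    have h1 : ∀ p₁ : Fin k × Fin m, (∑ p₂ : Fin k × Fin m,
        (if p₁ = p₂ then dd p₁ - hh p₁ * hh p₁ else 0)) = dd p₁ - hh p₁ * hh p₁ := by
      intro p₁
      rw [Finset.sum_ite_eq]
      simp
    simp_rw [h1, Finset.sum_sub_distrib]
    congr 1
    · exact aux_sum_mem bb v S hcard
    · have : ∀ p : Fin k × Fin m, hh p * hh p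
          = if p.2 ∈ S p.1 then K p.1 ^ 2 else 0 := by
        intro p
        by_cases hm : p.2 ∈ S p.1 <;> simp [hhh, hm, sq]
      simp_rw [this]
      exact aux_sum_mem (fun r => K r ^ 2) v S hcard
  rw [e1, e2]
  ring

section Core

variable {Ω : Type*} [MeasurableSpace Ω] (μ : Measure Ω) [IsProbabilityMeasure μ]
  {k m : ℕ} {t : ℝ} {X : Fin k → Fin m → Ω → ℝ}

lemma aux_integral_prod_indep' {ι : Type*} {f : ι → Ω → ℝ}
    (hindep : iIndepFun f μ) (hmeas : ∀ i, Measurable (f i))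
    (s : Finset ι) :
    ∫ ω, ∏ i ∈ s, f i ω ∂μ = ∏ i ∈ s, ∫ ω, f i ω ∂μ := by
  classical
  induction s using Finset.cons_induction with
  | empty => simp
  | cons i s hi ih =>
    have hip : IndepFun (∏ j ∈ s, f j) (f i) μ :=
      hindep.indepFun_finsetProd_of_notMem hmeas hi
    have hmp : Measurable (∏ j ∈ s, f j) := by
      have h : (∏ j ∈ s, f j) = fun ω => ∏ j ∈ s, f j ω := by funext ω; simp
      rw [h]; exact Finset.measurable_prod _ fun j _ => hmeas j
    have key := hip.symm.integral_mul_eq_mul_integral (hmeas i).aestronglyMeasurable hmp.aestronglyMeasurable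
    have h1 : ∫ ω, ∏ j ∈ cons i s hi, f j ω ∂μ = integral μ (f i * ∏ j ∈ s, f j) := by
      apply integral_congr_ae; filter_upwards with ω
      rw [Finset.prod_cons]; simp
    have h2 : integral μ (∏ j ∈ s, f j) = ∫ ω, ∏ j ∈ s, f j ω ∂μ := by
      apply integral_congr_ae; filter_upwards with ω; simp
    rw [h1, key, h2, ih, Finset.prod_cons]

lemma aux_master (hXmeas : ∀ r j, Measurable (X r j))
    (hindep : iIndepFun (fun p : Fin k × Fin m => X p.1 p.2) μ)
    (g : Fin k × Fin m → ℝ → ℝ) (hg : ∀ p, Measurable (g p)) :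
    ∫ ω, ∏ p : Fin k × Fin m, g p (X p.1 p.2 ω) ∂μ
    = ∏ p : Fin k × Fin m, ∫ ω, g p (X p.1 p.2 ω) ∂μ :=
  aux_integral_prod_indep' μ (hindep.comp g hg)
    (fun p => (hg p).comp (hXmeas p.1 p.2)) univ

variable (hXmeas : ∀ r j, Measurable (X r j)) (hXnn : ∀ r j ω, 0 ≤ X r j ω)
  (hindep : iIndepFun (fun p : Fin k × Fin m => X p.1 p.2) μ)
  (ht : 0 < t)
  {F a b : Fin k → ℝ} (hFpos : ∀ r, 0 < F r)
  (hIW : ∀ r j, ∫ ω, phiW t (X r j ω) ∂μ = F r)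
  (hIY : ∀ r j, ∫ ω, phiY t (X r j ω) ∂μ = a r)
  (hIY2 : ∀ r j, ∫ ω, phiY t (X r j ω) ^ 2 ∂μ = b r)

include hXmeas hXnn hindep ht hFpos hIW hIY hIY2

-- integral of the rho factor
lemma aux_int_rho (S : Fin k → Finset (Fin m)) (p : Fin k × Fin m) :
    ∫ ω, rho t S p (X p.1 p.2 ω) ∂μ = if p.2 ∈ S p.1 then F p.1 else 1 - F p.1 := by
  by_cases h : p.2 ∈ S p.1
  · simp only [rho, if_pos h]; exact hIW p.1 p.2
  · simp only [rho, if_neg h]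
    have hint : Integrable (fun ω => phiW t (X p.1 p.2 ω)) μ := by
      refine (integrable_const (1:ℝ)).mono'
        ((phiW_meas t).comp (hXmeas p.1 p.2)).aestronglyMeasurable ?_
      filter_upwards with ω
      have := phiW_mem t (X p.1 p.2 ω)
      rw [Real.norm_eq_abs, abs_of_nonneg this.1]; exact this.2
    rw [integral_sub (integrable_const 1) hint, integral_const, hIW p.1 p.2]
    simp

lemma aux_term1 (S : Fin k → Finset (Fin m)) (p₀ : Fin k × Fin m) :
    ∫ ω, phiY t (X p₀.1 p₀.2 ω) * ∏ p : Fin k × Fin m, rho t S p (X p.1 p.2 ω) ∂μ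
    = (∏ p : Fin k × Fin m, (if p.2 ∈ S p.1 then F p.1 else 1 - F p.1)) *
        (if p₀.2 ∈ S p₀.1 then a p₀.1 / F p₀.1 else 0) := by
  classical
  by_cases hmem : p₀.2 ∈ S p₀.1
  · have hpt : ∀ ω, phiY t (X p₀.1 p₀.2 ω) * ∏ p : Fin k × Fin m, rho t S p (X p.1 p.2 ω)
        = ∏ p : Fin k × Fin m,
            (if p = p₀ then phiY t else rho t S p) (X p.1 p.2 ω) := by
      intro ω
      rw [prod_one_special (fun p => (if p = p₀ then phiY t else rho t S p) (X p.1 p.2 ω))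
          (fun p => rho t S p (X p.1 p.2 ω)) p₀ (phiY t (X p₀.1 p₀.2 ω)) (by simp)
          (fun p hp => by simp [hp]),
        prod_one_special (fun p => rho t S p (X p.1 p.2 ω))
          (fun p => rho t S p (X p.1 p.2 ω)) p₀ (phiW t (X p₀.1 p₀.2 ω))
          (by simp [rho, hmem]) (fun p hp => rfl), ← mul_assoc, phiY_mul_phiW]
    rw [integral_congr_ae (Filter.Eventually.of_forall hpt)]
    rw [aux_master μ hXmeas hindep _ (fun p => by
      by_cases hp : p = p₀
      · rw [if_pos hp]; exact phiY_meas t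
      · rw [if_neg hp]; exact rho_meas t S p)]
    rw [prod_one_special (fun p => ∫ ω, (if p = p₀ then phiY t else rho t S p) (X p.1 p.2 ω) ∂μ)
      (fun p => if p.2 ∈ S p.1 then F p.1 else 1 - F p.1) p₀ (a p₀.1)
      (by simp only [if_pos rfl]; exact hIY p₀.1 p₀.2)
      (fun p hp => by
        rw [if_neg hp]
        exact aux_int_rho μ hXmeas hXnn hindep ht hFpos hIW hIY hIY2 S p)]
    rw [prod_one_special (fun p => if p.2 ∈ S p.1 then F p.1 else 1 - F p.1)
      (fun p => if p.2 ∈ S p.1 then F p.1 else 1 - F p.1) p₀ (F p₀.1)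
      (by simp [hmem]) (fun p hp => rfl)]
    rw [if_pos hmem]
    have hF0 : F p₀.1 ≠ 0 := ne_of_gt (hFpos p₀.1)
    field_simp
  · rw [if_neg hmem, mul_zero]
    have hpt : ∀ ω, phiY t (X p₀.1 p₀.2 ω) * ∏ p : Fin k × Fin m, rho t S p (X p.1 p.2 ω)
        = 0 := by
      intro ω
      rw [prod_one_special (fun p => rho t S p (X p.1 p.2 ω))
        (fun p => rho t S p (X p.1 p.2 ω)) p₀ (1 - phiW t (X p₀.1 p₀.2 ω))
        (by simp [rho, hmem]) (fun p hp => rfl), ← mul_assoc, phiY_mul_one_sub_phiW, zero_mul]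
    rw [integral_congr_ae (Filter.Eventually.of_forall hpt), integral_zero]

lemma aux_term2 (S : Fin k → Finset (Fin m)) (p₁ p₂ : Fin k × Fin m) :
    ∫ ω, phiY t (X p₁.1 p₁.2 ω) * phiY t (X p₂.1 p₂.2 ω)
        * ∏ p : Fin k × Fin m, rho t S p (X p.1 p.2 ω) ∂μ
    = (∏ p : Fin k × Fin m, (if p.2 ∈ S p.1 then F p.1 else 1 - F p.1)) *
        (if p₁.2 ∈ S p₁.1 ∧ p₂.2 ∈ S p₂.1 then
          (if p₁ = p₂ then b p₁.1 / F p₁.1 else (a p₁.1 / F p₁.1) * (a p₂.1 / F p₂.1))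
         else 0) := by
  classical
  by_cases h1 : p₁.2 ∈ S p₁.1
  · by_cases h2 : p₂.2 ∈ S p₂.1
    · by_cases heq : p₁ = p₂
      · subst heq
        rw [if_pos ⟨h1, h1⟩, if_pos rfl]
        have hpt : ∀ ω, phiY t (X p₁.1 p₁.2 ω) * phiY t (X p₁.1 p₁.2 ω)
              * ∏ p : Fin k × Fin m, rho t S p (X p.1 p.2 ω)
            = ∏ p : Fin k × Fin m,
                (if p = p₁ then (fun x => phiY t x ^ 2) else rho t S p) (X p.1 p.2 ω) := by
          intro ω
          rw [prod_one_special
              (fun p => (if p = p₁ then (fun x => phiY t x ^ 2) else rho t S p) (X p.1 p.2 ω))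
              (fun p => rho t S p (X p.1 p.2 ω)) p₁ (phiY t (X p₁.1 p₁.2 ω) ^ 2) (by simp)
              (fun p hp => by simp [hp]),
            prod_one_special (fun p => rho t S p (X p.1 p.2 ω))
              (fun p => rho t S p (X p.1 p.2 ω)) p₁ (phiW t (X p₁.1 p₁.2 ω))
              (by simp [rho, h1]) (fun p hp => rfl)]
          have h0 := phiY_sq_mul_phiW t (X p₁.1 p₁.2 ω)
          linear_combination (∏ p ∈ univ.erase p₁, rho t S p (X p.1 p.2 ω)) * h0
        rw [integral_congr_ae (Filter.Eventually.of_forall hpt)]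
        rw [aux_master μ hXmeas hindep _ (fun p => by
          by_cases hp : p = p₁
          · rw [if_pos hp]; exact (phiY_meas t).pow measurable_const
          · rw [if_neg hp]; exact rho_meas t S p)]
        rw [prod_one_special
          (fun p => ∫ ω, (if p = p₁ then (fun x => phiY t x ^ 2) else rho t S p) (X p.1 p.2 ω) ∂μ)
          (fun p => if p.2 ∈ S p.1 then F p.1 else 1 - F p.1) p₁ (b p₁.1)
          (by simp only [if_pos rfl]; exact hIY2 p₁.1 p₁.2)
          (fun p hp => by
            rw [if_neg hp]
            exact aux_int_rho μ hXmeas hXnn hindep ht hFpos hIW hIY hIY2 S p)]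
        rw [prod_one_special (fun p => if p.2 ∈ S p.1 then F p.1 else 1 - F p.1)
          (fun p => if p.2 ∈ S p.1 then F p.1 else 1 - F p.1) p₁ (F p₁.1)
          (by simp [h1]) (fun p hp => rfl)]
        have hF0 : F p₁.1 ≠ 0 := ne_of_gt (hFpos p₁.1)
        field_simp
      · rw [if_pos ⟨h1, h2⟩, if_neg heq]
        have hpt : ∀ ω, phiY t (X p₁.1 p₁.2 ω) * phiY t (X p₂.1 p₂.2 ω)
              * ∏ p : Fin k × Fin m, rho t S p (X p.1 p.2 ω)
            = ∏ p : Fin k × Fin m,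
                (if p = p₁ then phiY t else if p = p₂ then phiY t else rho t S p)
                  (X p.1 p.2 ω) := by
          intro ω
          rw [prod_two_special
              (fun p => (if p = p₁ then phiY t else if p = p₂ then phiY t else rho t S p)
                (X p.1 p.2 ω))
              (fun p => rho t S p (X p.1 p.2 ω)) p₁ p₂ heq
              (phiY t (X p₁.1 p₁.2 ω)) (phiY t (X p₂.1 p₂.2 ω)) (by simp)
              (by simp [Ne.symm heq]) (fun p hp hp' => by simp [hp, hp']),
            prod_two_special (fun p => rho t S p (X p.1 p.2 ω))
              (fun p => rho t S p (X p.1 p.2 ω)) p₁ p₂ heq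
              (phiW t (X p₁.1 p₁.2 ω)) (phiW t (X p₂.1 p₂.2 ω))
              (by simp [rho, h1]) (by simp [rho, h2]) (fun p hp hp' => rfl)]
          have ha1 := phiY_mul_phiW t (X p₁.1 p₁.2 ω)
          have ha2 := phiY_mul_phiW t (X p₂.1 p₂.2 ω)
          set R := ∏ p ∈ (univ.erase p₁).erase p₂, rho t S p (X p.1 p.2 ω)
          linear_combination (phiY t (X p₂.1 p₂.2 ω) * phiW t (X p₂.1 p₂.2 ω) * R) * ha1
            + (phiY t (X p₁.1 p₁.2 ω) * R) * ha2
        rw [integral_congr_ae (Filter.Eventually.of_forall hpt)]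
        rw [aux_master μ hXmeas hindep _ (fun p => by
          by_cases hp : p = p₁
          · rw [if_pos hp]; exact phiY_meas t
          · rw [if_neg hp]
            by_cases hp' : p = p₂
            · rw [if_pos hp']; exact phiY_meas t
            · rw [if_neg hp']; exact rho_meas t S p)]
        rw [prod_two_special
          (fun p => ∫ ω,
            (if p = p₁ then phiY t else if p = p₂ then phiY t else rho t S p) (X p.1 p.2 ω) ∂μ)
          (fun p => if p.2 ∈ S p.1 then F p.1 else 1 - F p.1) p₁ p₂ heq (a p₁.1) (a p₂.1)
          (by simp only [if_pos rfl]; exact hIY p₁.1 p₁.2)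
          (by simp only [if_neg (Ne.symm heq), if_pos rfl]; exact hIY p₂.1 p₂.2)
          (fun p hp hp' => by
            rw [if_neg hp, if_neg hp']
            exact aux_int_rho μ hXmeas hXnn hindep ht hFpos hIW hIY hIY2 S p)]
        rw [prod_two_special (fun p => if p.2 ∈ S p.1 then F p.1 else 1 - F p.1)
          (fun p => if p.2 ∈ S p.1 then F p.1 else 1 - F p.1) p₁ p₂ heq (F p₁.1) (F p₂.1)
          (by simp [h1]) (by simp [h2]) (fun p hp hp' => rfl)]
        have hF1 : F p₁.1 ≠ 0 := ne_of_gt (hFpos p₁.1)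
        have hF2 : F p₂.1 ≠ 0 := ne_of_gt (hFpos p₂.1)
        field_simp
    · rw [if_neg (fun hc => h2 hc.2), mul_zero]
      have hpt : ∀ ω, phiY t (X p₁.1 p₁.2 ω) * phiY t (X p₂.1 p₂.2 ω)
            * ∏ p : Fin k × Fin m, rho t S p (X p.1 p.2 ω) = 0 := by
        intro ω
        rw [prod_one_special (fun p => rho t S p (X p.1 p.2 ω))
          (fun p => rho t S p (X p.1 p.2 ω)) p₂ (1 - phiW t (X p₂.1 p₂.2 ω))
          (by simp [rho, h2]) (fun p hp => rfl)]
        have h0 := phiY_mul_one_sub_phiW t (X p₂.1 p₂.2 ω)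
        linear_combination (phiY t (X p₁.1 p₁.2 ω)
          * ∏ p ∈ univ.erase p₂, rho t S p (X p.1 p.2 ω)) * h0
      rw [integral_congr_ae (Filter.Eventually.of_forall hpt), integral_zero]
  · rw [if_neg (fun hc => h1 hc.1), mul_zero]
    have hpt : ∀ ω, phiY t (X p₁.1 p₁.2 ω) * phiY t (X p₂.1 p₂.2 ω)
          * ∏ p : Fin k × Fin m, rho t S p (X p.1 p.2 ω) = 0 := by
      intro ω
      rw [prod_one_special (fun p => rho t S p (X p.1 p.2 ω))
        (fun p => rho t S p (X p.1 p.2 ω)) p₁ (1 - phiW t (X p₁.1 p₁.2 ω))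
        (by simp [rho, h1]) (fun p hp => rfl)]
      have h0 := phiY_mul_one_sub_phiW t (X p₁.1 p₁.2 ω)
      linear_combination (phiY t (X p₂.1 p₂.2 ω)
        * ∏ p ∈ univ.erase p₁, rho t S p (X p.1 p.2 ω)) * h0
    rw [integral_congr_ae (Filter.Eventually.of_forall hpt), integral_zero]

lemma aux_intYprod (S : Fin k → Finset (Fin m)) (p₀ : Fin k × Fin m) :
    Integrable (fun ω => phiY t (X p₀.1 p₀.2 ω)
      * ∏ p : Fin k × Fin m, rho t S p (X p.1 p.2 ω)) μ := by
  refine (integrable_const t).mono' ?_ ?_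
  · exact (((phiY_meas t).comp (hXmeas p₀.1 p₀.2)).mul
      (Finset.measurable_prod _ fun p _ => (rho_meas t S p).comp (hXmeas p.1 p.2))).aestronglyMeasurable
  · filter_upwards with ω
    have hY := phiY_mem ht (hXnn p₀.1 p₀.2 ω)
    have hP0 : (0:ℝ) ≤ ∏ p : Fin k × Fin m, rho t S p (X p.1 p.2 ω) :=
      Finset.prod_nonneg fun p _ => (rho_mem t S p _).1
    have hP1 : (∏ p : Fin k × Fin m, rho t S p (X p.1 p.2 ω)) ≤ 1 :=
      Finset.prod_le_one (fun p _ => (rho_mem t S p _).1) (fun p _ => (rho_mem t S p _).2)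
    rw [Real.norm_eq_abs, abs_of_nonneg (mul_nonneg hY.1 hP0)]
    calc phiY t (X p₀.1 p₀.2 ω) * ∏ p : Fin k × Fin m, rho t S p (X p.1 p.2 ω)
        ≤ t * 1 := mul_le_mul hY.2 hP1 hP0 (le_of_lt ht)
    _ = t := mul_one t

lemma aux_intY2prod (S : Fin k → Finset (Fin m)) (p₁ p₂ : Fin k × Fin m) :
    Integrable (fun ω => phiY t (X p₁.1 p₁.2 ω) * phiY t (X p₂.1 p₂.2 ω)
      * ∏ p : Fin k × Fin m, rho t S p (X p.1 p.2 ω)) μ := by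
  refine (integrable_const (t*t)).mono' ?_ ?_
  · exact ((((phiY_meas t).comp (hXmeas p₁.1 p₁.2)).mul
      ((phiY_meas t).comp (hXmeas p₂.1 p₂.2))).mul
      (Finset.measurable_prod _ fun p _ => (rho_meas t S p).comp (hXmeas p.1 p.2))).aestronglyMeasurable
  · filter_upwards with ω
    have hY1 := phiY_mem ht (hXnn p₁.1 p₁.2 ω)
    have hY2 := phiY_mem ht (hXnn p₂.1 p₂.2 ω)
    have hP0 : (0:ℝ) ≤ ∏ p : Fin k × Fin m, rho t S p (X p.1 p.2 ω) :=
      Finset.prod_nonneg fun p _ => (rho_mem t S p _).1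
    have hP1 : (∏ p : Fin k × Fin m, rho t S p (X p.1 p.2 ω)) ≤ 1 :=
      Finset.prod_le_one (fun p _ => (rho_mem t S p _).1) (fun p _ => (rho_mem t S p _).2)
    rw [Real.norm_eq_abs, abs_of_nonneg (mul_nonneg (mul_nonneg hY1.1 hY2.1) hP0)]
    calc phiY t (X p₁.1 p₁.2 ω) * phiY t (X p₂.1 p₂.2 ω)
          * ∏ p : Fin k × Fin m, rho t S p (X p.1 p.2 ω)
        ≤ (t * t) * 1 := by
          apply mul_le_mul _ hP1 hP0 (by positivity)
          exact mul_le_mul hY1.2 hY2.2 hY2.1 (le_of_lt ht)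
    _ = t * t := mul_one _

lemma aux_ind_expand (v : Fin k → ℕ) (ω : Ω) :
    (∏ r, if (∑ j, phiW t (X r j ω)) = (v r : ℝ) then (1:ℝ) else 0)
    = ∑ S ∈ Fintype.piFinset (fun r => powersetCard (v r) (univ : Finset (Fin m))),
        ∏ p : Fin k × Fin m, rho t S p (X p.1 p.2 ω) := by
  classical
  have hexp : ∀ r : Fin k, (if (∑ j, phiW t (X r j ω)) = (v r : ℝ) then (1:ℝ) else 0)
      = ∑ Sr ∈ powersetCard (v r) (univ : Finset (Fin m)),
          ∏ j, (if j ∈ Sr then phiW t (X r j ω) else 1 - phiW t (X r j ω)) := by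
    intro r
    rw [aux_expand (fun j => phiW t (X r j ω))
      (fun j => by unfold phiW; by_cases h : X r j ω ≤ t <;> simp [h]) (v r)]
  simp_rw [hexp]
  rw [Finset.prod_univ_sum]
  apply Finset.sum_congr rfl
  intro S hS
  rw [Fintype.prod_prod_type]
  apply Finset.prod_congr rfl
  intro r _
  apply Finset.prod_congr rfl
  intro j _
  simp only [rho]
  by_cases h : j ∈ S r <;> simp [h]

lemma aux_L1 (v : Fin k → ℕ) :
    ∫ ω, (∏ r, if (∑ j, phiW t (X r j ω)) = (v r : ℝ) then (1:ℝ) else 0)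
        * (∑ p : Fin k × Fin m, phiY t (X p.1 p.2 ω)) ∂μ
    = (∏ r, (m.choose (v r) : ℝ) * F r ^ (v r) * (1 - F r) ^ (m - v r))
        * ∑ r, (v r : ℝ) * (a r / F r) := by
  classical
  set A := Fintype.piFinset (fun r : Fin k => powersetCard (v r) (univ : Finset (Fin m)))
    with hA
  have hsq : ∀ ω, (∏ r, if (∑ j, phiW t (X r j ω)) = (v r : ℝ) then (1:ℝ) else 0)
        * (∑ p : Fin k × Fin m, phiY t (X p.1 p.2 ω))
      = ∑ S ∈ A, ∑ p₀ : Fin k × Fin m,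
          phiY t (X p₀.1 p₀.2 ω) * ∏ p : Fin k × Fin m, rho t S p (X p.1 p.2 ω) := by
    intro ω
    rw [aux_ind_expand μ hXmeas hXnn hindep ht hFpos hIW hIY hIY2 v ω, Finset.sum_mul]
    apply Finset.sum_congr rfl
    intro S _
    rw [Finset.mul_sum]
    apply Finset.sum_congr rfl
    intro p₀ _
    ring
  rw [integral_congr_ae (Filter.Eventually.of_forall hsq)]
  rw [integral_finset_sum A (fun S _ => integrable_finset_sum _
    (fun p₀ _ => aux_intYprod μ hXmeas hXnn hindep ht hFpos hIW hIY hIY2 S p₀))]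
  have hterm : ∀ S ∈ A, ∑ p₀ : Fin k × Fin m,
      (∫ ω, phiY t (X p₀.1 p₀.2 ω) * ∏ p : Fin k × Fin m, rho t S p (X p.1 p.2 ω) ∂μ)
      = (∏ r, F r ^ (v r) * (1 - F r) ^ (m - v r)) * ∑ r, (v r : ℝ) * (a r / F r) := by
    intro S hS
    have hcard : ∀ r, (S r).card = v r := fun r =>
      Finset.mem_powersetCard_univ.mp (Fintype.mem_piFinset.mp hS r)
    have h1 : ∀ p₀ : Fin k × Fin m,
        (∫ ω, phiY t (X p₀.1 p₀.2 ω) * ∏ p : Fin k × Fin m, rho t S p (X p.1 p.2 ω) ∂μ)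
        = (∏ r, F r ^ (v r) * (1 - F r) ^ (m - v r)) *
            (if p₀.2 ∈ S p₀.1 then a p₀.1 / F p₀.1 else 0) := by
      intro p₀
      rw [aux_term1 μ hXmeas hXnn hindep ht hFpos hIW hIY hIY2 S p₀,
        aux_B0 F v S hcard]
    simp_rw [h1, ← Finset.mul_sum]
    congr 1
    exact aux_sum_mem (fun r => a r / F r) v S hcard
  have hswap : ∑ S ∈ A, (∫ ω, ∑ p₀ : Fin k × Fin m,
        phiY t (X p₀.1 p₀.2 ω) * ∏ p : Fin k × Fin m, rho t S p (X p.1 p.2 ω) ∂μ)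
      = ∑ S ∈ A, ((∏ r, F r ^ (v r) * (1 - F r) ^ (m - v r)) * ∑ r, (v r : ℝ) * (a r / F r)) := by
    apply Finset.sum_congr rfl
    intro S hS
    rw [integral_finset_sum _
      (fun p₀ _ => aux_intYprod μ hXmeas hXnn hindep ht hFpos hIW hIY hIY2 S p₀)]
    exact hterm S hS
  rw [hswap, Finset.sum_const]
  have hcardA : A.card = ∏ r, m.choose (v r) := by
    rw [hA, Fintype.card_piFinset]
    apply Finset.prod_congr rfl
    intro r _
    rw [Finset.card_powersetCard, Finset.card_univ, Fintype.card_fin]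
  rw [hcardA, nsmul_eq_mul, Nat.cast_prod, ← mul_assoc, ← Finset.prod_mul_distrib]
  congr 1
  apply Finset.prod_congr rfl
  intro r _
  ring

lemma aux_L2 (v : Fin k → ℕ) :
    ∫ ω, (∏ r, if (∑ j, phiW t (X r j ω)) = (v r : ℝ) then (1:ℝ) else 0)
        * (∑ p : Fin k × Fin m, phiY t (X p.1 p.2 ω)) ^ 2 ∂μ
    = (∏ r, (m.choose (v r) : ℝ) * F r ^ (v r) * (1 - F r) ^ (m - v r))
        * (∑ r, (v r : ℝ) * (b r / F r)
            + ((∑ r, (v r : ℝ) * (a r / F r)) ^ 2 - ∑ r, (v r : ℝ) * (a r / F r) ^ 2)) := by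
  classical
  set A := Fintype.piFinset (fun r : Fin k => powersetCard (v r) (univ : Finset (Fin m)))
    with hA
  have hsq : ∀ ω, (∏ r, if (∑ j, phiW t (X r j ω)) = (v r : ℝ) then (1:ℝ) else 0)
        * (∑ p : Fin k × Fin m, phiY t (X p.1 p.2 ω)) ^ 2
      = ∑ S ∈ A, ∑ p₁ : Fin k × Fin m, ∑ p₂ : Fin k × Fin m,
          phiY t (X p₁.1 p₁.2 ω) * phiY t (X p₂.1 p₂.2 ω)
            * ∏ p : Fin k × Fin m, rho t S p (X p.1 p.2 ω) := by
    intro ω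
    rw [aux_ind_expand μ hXmeas hXnn hindep ht hFpos hIW hIY hIY2 v ω, Finset.sum_mul]
    apply Finset.sum_congr rfl
    intro S _
    rw [sq, Finset.sum_mul_sum, Finset.mul_sum]
    apply Finset.sum_congr rfl
    intro p₁ _
    rw [Finset.mul_sum]
    apply Finset.sum_congr rfl
    intro p₂ _
    ring
  rw [integral_congr_ae (Filter.Eventually.of_forall hsq)]
  rw [integral_finset_sum A (fun S _ => integrable_finset_sum _
    (fun p₁ _ => integrable_finset_sum _
      (fun p₂ _ => aux_intY2prod μ hXmeas hXnn hindep ht hFpos hIW hIY hIY2 S p₁ p₂)))]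
  have hterm : ∀ S ∈ A, (∫ ω, ∑ p₁ : Fin k × Fin m, ∑ p₂ : Fin k × Fin m,
        phiY t (X p₁.1 p₁.2 ω) * phiY t (X p₂.1 p₂.2 ω)
          * ∏ p : Fin k × Fin m, rho t S p (X p.1 p.2 ω) ∂μ)
      = (∏ r, F r ^ (v r) * (1 - F r) ^ (m - v r))
          * (∑ r, (v r : ℝ) * (b r / F r)
            + ((∑ r, (v r : ℝ) * (a r / F r)) ^ 2
              - ∑ r, (v r : ℝ) * (a r / F r) ^ 2)) := by
    intro S hS
    have hcard : ∀ r, (S r).card = v r := fun r =>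
      Finset.mem_powersetCard_univ.mp (Fintype.mem_piFinset.mp hS r)
    rw [integral_finset_sum _ (fun p₁ _ => integrable_finset_sum _
      (fun p₂ _ => aux_intY2prod μ hXmeas hXnn hindep ht hFpos hIW hIY hIY2 S p₁ p₂))]
    have h1 : ∀ p₁ : Fin k × Fin m, (∫ ω, ∑ p₂ : Fin k × Fin m,
          phiY t (X p₁.1 p₁.2 ω) * phiY t (X p₂.1 p₂.2 ω)
            * ∏ p : Fin k × Fin m, rho t S p (X p.1 p.2 ω) ∂μ)
        = ∑ p₂ : Fin k × Fin m, (∏ r, F r ^ (v r) * (1 - F r) ^ (m - v r)) *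
            (if p₁.2 ∈ S p₁.1 ∧ p₂.2 ∈ S p₂.1 then
              (if p₁ = p₂ then b p₁.1 / F p₁.1 else (a p₁.1 / F p₁.1) * (a p₂.1 / F p₂.1))
             else 0) := by
      intro p₁
      rw [integral_finset_sum _
        (fun p₂ _ => aux_intY2prod μ hXmeas hXnn hindep ht hFpos hIW hIY hIY2 S p₁ p₂)]
      apply Finset.sum_congr rfl
      intro p₂ _
      rw [aux_term2 μ hXmeas hXnn hindep ht hFpos hIW hIY hIY2 S p₁ p₂, aux_B0 F v S hcard]
    simp_rw [h1, ← Finset.mul_sum]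
    congr 1
    exact aux_sum_pairs (fun r => a r / F r) (fun r => b r / F r) v S hcard
  have hswap : ∑ S ∈ A, (∫ ω, ∑ p₁ : Fin k × Fin m, ∑ p₂ : Fin k × Fin m,
        phiY t (X p₁.1 p₁.2 ω) * phiY t (X p₂.1 p₂.2 ω)
          * ∏ p : Fin k × Fin m, rho t S p (X p.1 p.2 ω) ∂μ)
      = ∑ S ∈ A, ((∏ r, F r ^ (v r) * (1 - F r) ^ (m - v r))
          * (∑ r, (v r : ℝ) * (b r / F r)
            + ((∑ r, (v r : ℝ) * (a r / F r)) ^ 2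
              - ∑ r, (v r : ℝ) * (a r / F r) ^ 2))) :=
    Finset.sum_congr rfl hterm
  rw [hswap, Finset.sum_const]
  have hcardA : A.card = ∏ r, m.choose (v r) := by
    rw [hA, Fintype.card_piFinset]
    apply Finset.prod_congr rfl
    intro r _
    rw [Finset.card_powersetCard, Finset.card_univ, Fintype.card_fin]
  rw [hcardA, nsmul_eq_mul, Nat.cast_prod, ← mul_assoc, ← Finset.prod_mul_distrib]
  congr 1
  apply Finset.prod_congr rfl
  intro r _
  ring

end Core

theorem variance_K_RSS
    {Ω : Type*} [MeasurableSpace Ω] (μ : Measure Ω) [IsProbabilityMeasure μ]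
    (k m : ℕ) (hk : 1 ≤ k) (hm : 1 ≤ m) (t : ℝ) (ht : 0 < t)
    (X : Fin k → Fin m → Ω → ℝ) (hXmeas : ∀ r j, Measurable (X r j))
    (hXnn : ∀ r j ω, 0 ≤ X r j ω)
    (hindep : iIndepFun (fun p : Fin k × Fin m => X p.1 p.2) μ)
    (Fr : Fin k → ℝ → ℝ) (hFr : ∀ r j x, Fr r x = (μ {ω | X r j ω ≤ x}).toReal)
    (hFrt : ∀ r, 0 < Fr r t)
    (Kr : Fin k → ℝ) (hKr : ∀ r, Kr r = (∫ x in (0:ℝ)..t, Fr r x) / Fr r t)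
    (σ2r : Fin k → ℝ)
    (hσ2r : ∀ r, σ2r r = (2 * ∫ x in (0:ℝ)..t, (t - x) * Fr r x) / Fr r t - (Kr r) ^ 2)
    (V : Fin k → Ω → ℝ)
    (hV : ∀ r ω, V r ω = ∑ j, (if X r j ω ≤ t then (1 : ℝ) else 0))
    (U : Fin k → Ω → ℝ)
    (hU : ∀ r ω, U r ω = ∑ j, (t - X r j ω) * (if X r j ω ≤ t then (1 : ℝ) else 0))
    (KRSS : Ω → ℝ)
    (hKRSS : ∀ ω, KRSS ω =
      if 0 < ∑ r, V r ω then (∑ r, U r ω) / (∑ r, V r ω) else 0)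
    (p : (Fin k → ℕ) → ℝ)
    (hp : ∀ v, p v = ∏ r, (m.choose (v r) : ℝ) * Fr r t ^ (v r) * (1 - Fr r t) ^ (m - v r)) :
    ProbabilityTheory.variance KRSS μ
      = (∑ v ∈ (Fintype.piFinset fun _ : Fin k => Finset.range (m + 1)).filter
              (fun v => 0 < ∑ r, v r),
            (p v / (∑ r, (v r : ℝ)) ^ 2) * ∑ r, (v r : ℝ) * σ2r r)
        + (∑ v ∈ (Fintype.piFinset fun _ : Fin k => Finset.range (m + 1)).filter
              (fun v => 0 < ∑ r, v r),
            (p v / (∑ r, (v r : ℝ)) ^ 2) * (∑ r, (v r : ℝ) * Kr r) ^ 2)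
        - (∑ v ∈ (Fintype.piFinset fun _ : Fin k => Finset.range (m + 1)).filter
              (fun v => 0 < ∑ r, v r),
            (p v / (∑ r, (v r : ℝ))) * ∑ r, (v r : ℝ) * Kr r) ^ 2 := by
  classical
  -- basic abbreviations and facts
  have hIW : ∀ (r : Fin k) (j : Fin m), ∫ ω, phiW t (X r j ω) ∂μ = Fr r t := by
    intro r j
    rw [hFr r j t]
    exact aux_cdf μ (hXmeas r j) t
  have hIY : ∀ (r : Fin k) (j : Fin m),
      ∫ ω, phiY t (X r j ω) ∂μ = ∫ x in (0:ℝ)..t, Fr r x := by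
    intro r j
    have h0 := aux_LC1 μ (hXmeas r j) (fun ω => hXnn r j ω) ht
    have h1 : (fun ω => phiY t (X r j ω))
        = fun ω => (t - X r j ω) * (if X r j ω ≤ t then (1:ℝ) else 0) := rfl
    rw [h1, h0, intervalIntegral.integral_of_le (le_of_lt ht)]
    apply integral_congr_ae
    filter_upwards with x
    exact (hFr r j x).symm
  have hIY2 : ∀ (r : Fin k) (j : Fin m),
      ∫ ω, phiY t (X r j ω) ^ 2 ∂μ = 2 * ∫ x in (0:ℝ)..t, (t - x) * Fr r x := by
    intro r j
    have h0 := aux_LC2 μ (hXmeas r j) (fun ω => hXnn r j ω) ht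
    have h1 : (fun ω => phiY t (X r j ω) ^ 2)
        = fun ω => ((t - X r j ω) * (if X r j ω ≤ t then (1:ℝ) else 0)) ^ 2 := rfl
    rw [h1, h0]
    have h2 : ∫ x in Set.Ioc (0:ℝ) t, 2 * (t - x) * (μ {ω | X r j ω ≤ x}).toReal
        = ∫ x in Set.Ioc (0:ℝ) t, 2 * ((t - x) * Fr r x) := by
      apply integral_congr_ae
      filter_upwards with x
      rw [← hFr r j x]
      ring
    rw [h2, ← intervalIntegral.integral_of_le (le_of_lt ht),
      intervalIntegral.integral_const_mul]
  -- V and U in phi form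
  have hVphi : ∀ (r : Fin k) (ω : Ω), V r ω = ∑ j, phiW t (X r j ω) := fun r ω => hV r ω
  have hUphi : ∀ ω, (∑ r, U r ω) = ∑ p : Fin k × Fin m, phiY t (X p.1 p.2 ω) := by
    intro ω
    rw [Fintype.sum_prod_type]
    apply Finset.sum_congr rfl
    intro r _
    exact hU r ω
  -- natural-number counts
  set N : Ω → Fin k → ℕ := fun ω r => ∑ j, if X r j ω ≤ t then 1 else 0 with hN
  have hVN : ∀ (r : Fin k) (ω : Ω), V r ω = ((N ω r : ℕ) : ℝ) := by
    intro r ω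
    rw [hV r ω, hN]
    simp only
    rw [Nat.cast_sum]
    apply Finset.sum_congr rfl
    intro j _
    by_cases h : X r j ω ≤ t <;> simp [h]
  have hNle : ∀ (ω : Ω) (r : Fin k), N ω r ≤ m := by
    intro ω r
    calc N ω r ≤ ∑ _j : Fin m, 1 := Finset.sum_le_sum (fun j _ => by
          by_cases h : X r j ω ≤ t <;> simp [h])
    _ = m := by simp
  have hsumVN : ∀ ω, (∑ r, V r ω) = ((∑ r, N ω r : ℕ) : ℝ) := by
    intro ω
    rw [Nat.cast_sum]
    exact Finset.sum_congr rfl fun r _ => hVN r ω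
  set A := (Fintype.piFinset fun _ : Fin k => Finset.range (m + 1)).filter
      (fun v => 0 < ∑ r, v r) with hAdef
  have hmemA : ∀ ω, 0 < ∑ r, N ω r → N ω ∈ A := by
    intro ω h
    rw [hAdef, Finset.mem_filter]
    exact ⟨Fintype.mem_piFinset.mpr fun r =>
      Finset.mem_range.mpr (Nat.lt_succ_of_le (hNle ω r)), h⟩
  have hindval : ∀ (v : Fin k → ℕ) (ω : Ω),
      (∏ r, if V r ω = (v r : ℝ) then (1:ℝ) else 0) = if v = N ω then 1 else 0 := by
    intro v ω
    rw [Finset.prod_boole]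
    by_cases h : v = N ω
    · rw [if_pos h, if_pos]
      intro r _
      rw [hVN r ω, h]
    · rw [if_neg h, if_neg]
      intro hall
      apply h
      funext r
      have := hall r (Finset.mem_univ r)
      rw [hVN r ω] at this
      exact_mod_cast this.symm
  -- pointwise decomposition of KRSS
  have hKpt : ∀ ω, KRSS ω = ∑ v ∈ A,
      (∏ r, if V r ω = (v r : ℝ) then (1:ℝ) else 0)
        * ((∑ r, U r ω) / (∑ r, (v r : ℝ))) := by
    intro ω
    rw [hKRSS ω]
    by_cases h : 0 < ∑ r, N ω r
    · have hVpos : 0 < ∑ r, V r ω := by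
        rw [hsumVN]
        exact_mod_cast h
      rw [if_pos hVpos, Finset.sum_eq_single_of_mem (N ω) (hmemA ω h)]
      · rw [hindval (N ω) ω, if_pos rfl, one_mul, hsumVN ω, Nat.cast_sum]
      · intro v _ hvne
        rw [hindval v ω, if_neg hvne, zero_mul]
    · have hVnpos : ¬ 0 < ∑ r, V r ω := by
        rw [hsumVN]
        intro hc
        exact h (by exact_mod_cast hc)
      rw [if_neg hVnpos]
      symm
      apply Finset.sum_eq_zero
      intro v hv
      have hvne : v ≠ N ω := by
        intro he
        rw [hAdef, Finset.mem_filter] at hv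
        exact h (he ▸ hv.2)
      rw [hindval v ω, if_neg hvne, zero_mul]
  have hK2pt : ∀ ω, KRSS ω ^ 2 = ∑ v ∈ A,
      (∏ r, if V r ω = (v r : ℝ) then (1:ℝ) else 0)
        * ((∑ r, U r ω) ^ 2 / (∑ r, (v r : ℝ)) ^ 2) := by
    intro ω
    rw [hKRSS ω]
    by_cases h : 0 < ∑ r, N ω r
    · have hVpos : 0 < ∑ r, V r ω := by
        rw [hsumVN]
        exact_mod_cast h
      rw [if_pos hVpos, Finset.sum_eq_single_of_mem (N ω) (hmemA ω h)]
      · rw [hindval (N ω) ω, if_pos rfl, one_mul, hsumVN ω, Nat.cast_sum, div_pow]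
      · intro v _ hvne
        rw [hindval v ω, if_neg hvne, zero_mul]
    · have hVnpos : ¬ 0 < ∑ r, V r ω := by
        rw [hsumVN]
        intro hc
        exact h (by exact_mod_cast hc)
      rw [if_neg hVnpos]
      rw [zero_pow (by norm_num : (2:ℕ) ≠ 0)]
      symm
      apply Finset.sum_eq_zero
      intro v hv
      have hvne : v ≠ N ω := by
        intro he
        rw [hAdef, Finset.mem_filter] at hv
        exact h (he ▸ hv.2)
      rw [hindval v ω, if_neg hvne, zero_mul]
  -- measurability
  have hUmeas : Measurable fun ω => ∑ r, U r ω := by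
    have h1 : (fun ω => ∑ r, U r ω)
        = fun ω => ∑ p : Fin k × Fin m, phiY t (X p.1 p.2 ω) := funext hUphi
    rw [h1]
    exact Finset.measurable_sum _ fun p _ => (phiY_meas t).comp (hXmeas p.1 p.2)
  have hVmeas : ∀ r, Measurable (V r) := by
    intro r
    have h1 : V r = fun ω => ∑ j, phiW t (X r j ω) := funext (hVphi r)
    rw [h1]
    exact Finset.measurable_sum _ fun j _ => (phiW_meas t).comp (hXmeas r j)
  have hVsmeas : Measurable fun ω => ∑ r, V r ω :=
    Finset.measurable_sum _ fun r _ => hVmeas r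
  have hindmeas : ∀ v : Fin k → ℕ,
      Measurable fun ω => ∏ r, if V r ω = (v r : ℝ) then (1:ℝ) else 0 := by
    intro v
    apply Finset.measurable_prod
    intro r _
    exact Measurable.ite ((hVmeas r) (measurableSet_singleton ((v r : ℝ)))) measurable_const
      measurable_const
  -- bounds
  have hUb : ∀ ω, 0 ≤ (∑ r, U r ω) ∧ (∑ r, U r ω) ≤ (k * m : ℝ) * t := by
    intro ω
    rw [hUphi ω]
    constructor
    · exact Finset.sum_nonneg fun p _ => (phiY_mem ht (hXnn p.1 p.2 ω)).1
    · calc ∑ p : Fin k × Fin m, phiY t (X p.1 p.2 ω)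
          ≤ ∑ _p : Fin k × Fin m, t :=
            Finset.sum_le_sum fun p _ => (phiY_mem ht (hXnn p.1 p.2 ω)).2
      _ = (k * m : ℝ) * t := by
          rw [Finset.sum_const, Finset.card_univ, Fintype.card_prod, Fintype.card_fin,
            Fintype.card_fin, nsmul_eq_mul]
          push_cast
          ring
  have hindb : ∀ (v : Fin k → ℕ) ω,
      (∏ r, if V r ω = (v r : ℝ) then (1:ℝ) else 0) ∈ Set.Icc (0:ℝ) 1 := by
    intro v ω
    rw [hindval v ω]
    by_cases h : v = N ω <;> simp [h]
  -- integrability of summands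
  have hint1 : ∀ (v : Fin k → ℕ) (c : ℝ), Integrable (fun ω =>
      (∏ r, if V r ω = (v r : ℝ) then (1:ℝ) else 0) * ((∑ r, U r ω) / c)) μ := by
    intro v c
    refine (integrable_const ((k * m : ℝ) * t * |c|⁻¹)).mono' ?_ ?_
    · exact ((hindmeas v).mul (hUmeas.div measurable_const)).aestronglyMeasurable
    · filter_upwards with ω
      have h1 := hindb v ω
      have h2 := hUb ω
      rw [Real.norm_eq_abs, abs_mul, abs_div]
      calc |∏ r, if V r ω = (v r : ℝ) then (1:ℝ) else 0| * (|∑ r, U r ω| / |c|)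
          ≤ 1 * (((k * m : ℝ) * t) * |c|⁻¹) := by
            apply mul_le_mul
            · rw [abs_of_nonneg h1.1]; exact h1.2
            · rw [div_eq_mul_inv]
              apply mul_le_mul_of_nonneg_right _ (inv_nonneg.mpr (abs_nonneg c))
              rw [abs_of_nonneg h2.1]; exact h2.2
            · positivity
            · norm_num
      _ = (k * m : ℝ) * t * |c|⁻¹ := one_mul _
  have hint2 : ∀ (v : Fin k → ℕ) (c : ℝ), Integrable (fun ω =>
      (∏ r, if V r ω = (v r : ℝ) then (1:ℝ) else 0) * ((∑ r, U r ω) ^ 2 / c)) μ := by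
    intro v c
    refine (integrable_const (((k * m : ℝ) * t) ^ 2 * |c|⁻¹)).mono' ?_ ?_
    · exact ((hindmeas v).mul ((hUmeas.pow measurable_const).div
        measurable_const)).aestronglyMeasurable
    · filter_upwards with ω
      have h1 := hindb v ω
      have h2 := hUb ω
      rw [Real.norm_eq_abs, abs_mul, abs_div]
      calc |∏ r, if V r ω = (v r : ℝ) then (1:ℝ) else 0| * (|(∑ r, U r ω) ^ 2| / |c|)
          ≤ 1 * ((((k * m : ℝ) * t) ^ 2) * |c|⁻¹) := by
            apply mul_le_mul
            · rw [abs_of_nonneg h1.1]; exact h1.2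
            · rw [div_eq_mul_inv]
              apply mul_le_mul_of_nonneg_right _ (inv_nonneg.mpr (abs_nonneg c))
              rw [abs_of_nonneg (by positivity : (0:ℝ) ≤ (∑ r, U r ω) ^ 2)]
              apply pow_le_pow_left₀ h2.1 h2.2
            · positivity
            · norm_num
      _ = ((k * m : ℝ) * t) ^ 2 * |c|⁻¹ := one_mul _
  -- the two moment computations
  have hI1 : ∫ ω, KRSS ω ∂μ = ∑ v ∈ A,
      (p v / (∑ r, (v r : ℝ))) * ∑ r, (v r : ℝ) * Kr r := by
    rw [integral_congr_ae (Filter.Eventually.of_forall hKpt),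
      integral_finset_sum _ (fun v _ => hint1 v _)]
    apply Finset.sum_congr rfl
    intro v _
    have h1 : (fun ω => (∏ r, if V r ω = (v r : ℝ) then (1:ℝ) else 0)
          * ((∑ r, U r ω) / (∑ r, (v r : ℝ))))
        = fun ω => ((∏ r, if (∑ j, phiW t (X r j ω)) = (v r : ℝ) then (1:ℝ) else 0)
          * (∑ q : Fin k × Fin m, phiY t (X q.1 q.2 ω))) * (∑ r, (v r : ℝ))⁻¹ := by
      funext ω
      rw [hUphi ω]
      have h2 : (∏ r, if V r ω = (v r : ℝ) then (1:ℝ) else 0)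
          = ∏ r, if (∑ j, phiW t (X r j ω)) = (v r : ℝ) then (1:ℝ) else 0 := by
        apply Finset.prod_congr rfl
        intro r _
        rw [hVphi r ω]
      rw [h2]
      ring
    rw [h1, integral_mul_const,
      aux_L1 μ hXmeas hXnn hindep ht hFrt hIW hIY hIY2 v, hp v]
    have h3 : ∑ r, (v r : ℝ) * ((∫ x in (0:ℝ)..t, Fr r x) / Fr r t)
        = ∑ r, (v r : ℝ) * Kr r := by
      apply Finset.sum_congr rfl
      intro r _
      rw [hKr r]
    rw [h3]
    ring
  have hI2 : ∫ ω, KRSS ω ^ 2 ∂μ = ∑ v ∈ A,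
      ((p v / (∑ r, (v r : ℝ)) ^ 2) * ∑ r, (v r : ℝ) * σ2r r
        + (p v / (∑ r, (v r : ℝ)) ^ 2) * (∑ r, (v r : ℝ) * Kr r) ^ 2) := by
    rw [integral_congr_ae (Filter.Eventually.of_forall hK2pt),
      integral_finset_sum _ (fun v _ => hint2 v _)]
    apply Finset.sum_congr rfl
    intro v _
    have h1 : (fun ω => (∏ r, if V r ω = (v r : ℝ) then (1:ℝ) else 0)
          * ((∑ r, U r ω) ^ 2 / (∑ r, (v r : ℝ)) ^ 2))
        = fun ω => ((∏ r, if (∑ j, phiW t (X r j ω)) = (v r : ℝ) then (1:ℝ) else 0)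
          * (∑ q : Fin k × Fin m, phiY t (X q.1 q.2 ω)) ^ 2) * ((∑ r, (v r : ℝ)) ^ 2)⁻¹ := by
      funext ω
      rw [hUphi ω]
      have h2 : (∏ r, if V r ω = (v r : ℝ) then (1:ℝ) else 0)
          = ∏ r, if (∑ j, phiW t (X r j ω)) = (v r : ℝ) then (1:ℝ) else 0 := by
        apply Finset.prod_congr rfl
        intro r _
        rw [hVphi r ω]
      rw [h2]
      ring
    rw [h1, integral_mul_const,
      aux_L2 μ hXmeas hXnn hindep ht hFrt hIW hIY hIY2 v, hp v]
    have hσ : ∀ r : Fin k, (v r : ℝ) * σ2r r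
        = (v r : ℝ) * ((2 * ∫ x in (0:ℝ)..t, (t - x) * Fr r x) / Fr r t)
          - (v r : ℝ) * ((∫ x in (0:ℝ)..t, Fr r x) / Fr r t) ^ 2 := by
      intro r
      rw [hσ2r r, hKr r]
      ring
    have hK : ∀ r : Fin k, (v r : ℝ) * Kr r
        = (v r : ℝ) * ((∫ x in (0:ℝ)..t, Fr r x) / Fr r t) := by
      intro r
      rw [hKr r]
    simp_rw [hσ, hK, Finset.sum_sub_distrib]
    ring
  -- Memℒp and conclusion
  have hKmeasfun : Measurable KRSS := by
    have h1 : KRSS = fun ω => if 0 < ∑ r, V r ω then (∑ r, U r ω) / (∑ r, V r ω) else 0 :=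
      funext hKRSS
    rw [h1]
    exact Measurable.ite (measurableSet_lt measurable_const hVsmeas)
      (hUmeas.div hVsmeas) measurable_const
  have hmem2 : MemLp KRSS 2 μ := by
    apply MemLp.of_bound hKmeasfun.aestronglyMeasurable ((k * m : ℝ) * t)
    filter_upwards with ω
    rw [hKRSS ω]
    by_cases h : 0 < ∑ r, V r ω
    · rw [if_pos h]
      have h1 : (1:ℝ) ≤ ∑ r, V r ω := by
        rw [hsumVN] at h ⊢
        have : 0 < ∑ r, N ω r := by exact_mod_cast h
        exact_mod_cast this
      have h2 := hUb ω
      rw [Real.norm_eq_abs, abs_of_nonneg (div_nonneg h2.1 (le_of_lt h))]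
      calc (∑ r, U r ω) / (∑ r, V r ω) ≤ (∑ r, U r ω) := div_le_self h2.1 h1
      _ ≤ (k * m : ℝ) * t := h2.2
    · rw [if_neg h, norm_zero]
      positivity
  rw [variance_eq_sub hmem2]
  have hsq : ∫ ω, (KRSS ^ 2) ω ∂μ = ∫ ω, KRSS ω ^ 2 ∂μ := by
    apply integral_congr_ae
    filter_upwards with ω
    simp [pow_two]
  rw [hsq, hI2, hI1, Finset.sum_add_distrib]
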